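/- Let M ⊆ ℝ³ be a set such that for each coordinate index i ∈ {1,2,3} and each real value c, the set of points of M whose i-th coordinate equals c has cardinality 0 or 2. Define a simple graph G(M) whose vertices are the points of M, with two distinct points adjacent if and only if they agree in some coordinate (i.e., they lie in a common layer). Then M is basic if and only if the graph G(M) is basic. -/

import Mathlib

/-- A set `M ⊆ ℝ³` is *basic* if every real-valued function on `M` decomposes as a sum of
functions of the three separate coordinates. -/
def IsBasic (M : Set (Fin 3 → ℝ)) : Prop :=
  ∀ f : (Fin 3 → ℝ) → ℝ, ∃ f₁ f₂ f₃ : ℝ → ℝ,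
    ∀ p ∈ M, f p = f₁ (p 0) + f₂ (p 1) + f₃ (p 2)

/-- The graph `G(M)` whose vertices are the points of `M`, two distinct points being
adjacent iff they agree in some coordinate (i.e. lie in a common layer). -/
def layerGraph (M : Set (Fin 3 → ℝ)) : SimpleGraph M where
  Adj p q := p ≠ q ∧ ∃ i : Fin 3, (p : Fin 3 → ℝ) i = (q : Fin 3 → ℝ) i
  symm := by
    constructor
    rintro p q ⟨hne, i, hi⟩
    exact ⟨hne.symm, i, hi.symm⟩
  loopless := by
    constructor
    rintro p ⟨hne, -⟩
    exact hne rfl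

/-- A (possibly infinite) simple graph is *basic* if for every assignment `b` of reals to
the vertices there is an assignment `x` of reals to the edges such that the number at
each vertex equals the (finite) sum of the numbers on its incident edges. -/
def GraphBasic {V : Type} (G : SimpleGraph V) : Prop :=
  ∀ b : V → ℝ, ∃ x : Sym2 V → ℝ,
    ∀ v : V, (∑ᶠ e ∈ G.incidenceSet v, x e) = b v

namespace BasicAuxNS

open Finset

variable {M : Set (Fin 3 → ℝ)}

/-- Each point has, for each coordinate, a unique "partner" in the same layer. -/
theorem partner_exu
    (hlayer : ∀ (i : Fin 3) (c : ℝ),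
      {p ∈ M | p i = c} = ∅ ∨ ∃ a b : Fin 3 → ℝ, a ≠ b ∧ {p ∈ M | p i = c} = {a, b})
    (p : M) (i : Fin 3) :
    ∃! q : M, (q : Fin 3 → ℝ) i = (p : Fin 3 → ℝ) i ∧ q ≠ p := by
  rcases hlayer i ((p : Fin 3 → ℝ) i) with h | ⟨a, b, hab, hset⟩
  · exfalso
    have hp : (p : Fin 3 → ℝ) ∈ {q ∈ M | q i = (p : Fin 3 → ℝ) i} := ⟨p.2, rfl⟩
    rw [h] at hp
    exact hp
  · have hpmem : (p : Fin 3 → ℝ) ∈ ({a, b} : Set (Fin 3 → ℝ)) := by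
      rw [← hset]; exact ⟨p.2, rfl⟩
    have hamem : a ∈ M ∧ a i = (p : Fin 3 → ℝ) i := by
      have : a ∈ {q ∈ M | q i = (p : Fin 3 → ℝ) i} := by
        rw [hset]; exact Set.mem_insert _ _
      exact this
    have hbmem : b ∈ M ∧ b i = (p : Fin 3 → ℝ) i := by
      have : b ∈ {q ∈ M | q i = (p : Fin 3 → ℝ) i} := by
        rw [hset]; exact Set.mem_insert_iff.mpr (Or.inr rfl)
      exact this
    rcases hpmem with hpa | hpb
    · refine ⟨⟨b, hbmem.1⟩, ⟨hbmem.2, ?_⟩, ?_⟩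
      · intro h
        apply hab
        have : b = (p : Fin 3 → ℝ) := congrArg Subtype.val h
        rw [this, ← hpa]
      · rintro y ⟨hyi, hyne⟩
        have hy : (y : Fin 3 → ℝ) ∈ ({a, b} : Set (Fin 3 → ℝ)) := by
          rw [← hset]; exact ⟨y.2, hyi⟩
        rcases hy with hya | hyb
        · exfalso; apply hyne; apply Subtype.ext; rw [hya, ← hpa]
        · exact Subtype.ext hyb
    · refine ⟨⟨a, hamem.1⟩, ⟨hamem.2, ?_⟩, ?_⟩
      · intro h
        apply hab
        have : a = (p : Fin 3 → ℝ) := congrArg Subtype.val h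
        rw [this, ← hpb]
      · rintro y ⟨hyi, hyne⟩
        have hy : (y : Fin 3 → ℝ) ∈ ({a, b} : Set (Fin 3 → ℝ)) := by
          rw [← hset]; exact ⟨y.2, hyi⟩
        rcases hy with hya | hyb
        · exact Subtype.ext hya
        · exfalso; apply hyne; apply Subtype.ext; rw [hyb, ← hpb]

variable (hlayer : ∀ (i : Fin 3) (c : ℝ),
      {p ∈ M | p i = c} = ∅ ∨ ∃ a b : Fin 3 → ℝ, a ≠ b ∧ {p ∈ M | p i = c} = {a, b})

/-- The partner of `p` in coordinate `i`. -/
noncomputable def ptn (p : M) (i : Fin 3) : M :=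
  (partner_exu hlayer p i).exists.choose

theorem ptn_coord (p : M) (i : Fin 3) :
    ((ptn hlayer p i : M) : Fin 3 → ℝ) i = (p : Fin 3 → ℝ) i :=
  (partner_exu hlayer p i).exists.choose_spec.1

theorem ptn_ne (p : M) (i : Fin 3) : ptn hlayer p i ≠ p :=
  (partner_exu hlayer p i).exists.choose_spec.2

theorem ptn_unique {p q : M} {i : Fin 3}
    (h1 : (q : Fin 3 → ℝ) i = (p : Fin 3 → ℝ) i) (h2 : q ≠ p) :
    q = ptn hlayer p i :=
  (partner_exu hlayer p i).unique ⟨h1, h2⟩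
    ⟨ptn_coord hlayer p i, ptn_ne hlayer p i⟩

/-- The incidence set of `p` is the finite set of edges to the three partners. -/
theorem incidence_eq (p : M) :
    (layerGraph M).incidenceSet p =
      ↑((Finset.univ : Finset (Fin 3)).image (fun i => s(p, ptn hlayer p i))) := by
  ext e
  induction e using Sym2.ind with
  | _ a b =>
    simp only [SimpleGraph.mk'_mem_incidenceSet_iff, Finset.coe_image, Finset.coe_univ,
      Set.image_univ, Set.mem_range]
    constructor
    · rintro ⟨⟨hne, i, hi⟩, hp⟩
      rcases hp with rfl | rfl
      · have hb : b = ptn hlayer p i := ptn_unique hlayer hi.symm (Ne.symm hne)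
        exact ⟨i, by rw [← hb]⟩
      · have ha : a = ptn hlayer p i := ptn_unique hlayer hi hne
        exact ⟨i, by rw [← ha]; exact Sym2.eq_swap⟩
    · rintro ⟨i, hi⟩
      rw [Sym2.eq_iff] at hi
      rcases hi with ⟨rfl, rfl⟩ | ⟨rfl, rfl⟩
      · exact ⟨⟨(ptn_ne hlayer p i).symm, i, (ptn_coord hlayer p i).symm⟩, Or.inl rfl⟩
      · exact ⟨⟨ptn_ne hlayer p i, i, ptn_coord hlayer p i⟩, Or.inr rfl⟩

/-- The fiber of the edge map equals the agreement set of the corresponding partner. -/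
theorem fiber_eq (p : M) (c : Fin 3) :
    (Finset.univ.filter fun i => s(p, ptn hlayer p i) = s(p, ptn hlayer p c)) =
      (Finset.univ.filter fun j =>
        (p : Fin 3 → ℝ) j = ((ptn hlayer p c : M) : Fin 3 → ℝ) j) := by
  ext i
  simp only [Finset.mem_filter, Finset.mem_univ, true_and, Sym2.congr_right]
  constructor
  · intro h
    rw [← h]
    exact (ptn_coord hlayer p i).symm
  · intro h
    exact (ptn_unique hlayer h.symm (ptn_ne hlayer p c)).symm

end BasicAuxNS

open Finset BasicAuxNS in
/-- If every layer contains either no point or exactly two points of `M`, then `M` is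
basic iff the graph `G(M)` is basic. -/
theorem basic_iff_layerGraph_basic (M : Set (Fin 3 → ℝ))
    (hlayer : ∀ (i : Fin 3) (c : ℝ),
      {p ∈ M | p i = c} = ∅ ∨ ∃ a b : Fin 3 → ℝ, a ≠ b ∧ {p ∈ M | p i = c} = {a, b}) :
    IsBasic M ↔ GraphBasic (layerGraph M) := by
  classical
  constructor
  · -- basic set → basic graph
    intro hM b
    obtain ⟨f₁, f₂, f₃, hf⟩ :=
      hM (fun v => if h : v ∈ M then b ⟨v, h⟩ else 0)
    set F : Fin 3 → ℝ → ℝ := ![f₁, f₂, f₃] with hF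
    have hb : ∀ p : M, b p = ∑ i : Fin 3, F i ((p : Fin 3 → ℝ) i) := by
      intro p
      have := hf p.1 p.2
      rw [dif_pos p.2] at this
      rw [Fin.sum_univ_three]
      simpa [hF] using this
    refine ⟨Sym2.lift ⟨fun a b' =>
        ∑ i ∈ Finset.univ.filter
          (fun i => (a : Fin 3 → ℝ) i = (b' : Fin 3 → ℝ) i), F i ((a : Fin 3 → ℝ) i),
      ?_⟩, ?_⟩
    · intro a b'
      have hfil : (Finset.univ.filter fun i => (a : Fin 3 → ℝ) i = (b' : Fin 3 → ℝ) i) =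
          (Finset.univ.filter fun i => (b' : Fin 3 → ℝ) i = (a : Fin 3 → ℝ) i) := by
        ext i; simp [eq_comm]
      dsimp only
      rw [hfil]
      refine Finset.sum_congr rfl ?_
      intro i hi
      simp only [Finset.mem_filter] at hi
      rw [hi.2]
    · intro p
      rw [incidence_eq hlayer p, finsum_mem_coe_finset, hb p]
      refine Finset.sum_image' _ ?_
      intro c _
      rw [Sym2.lift_mk]
      dsimp only
      rw [fiber_eq hlayer p c]
  · -- basic graph → basic set
    intro hG f
    obtain ⟨x, hx⟩ := hG (fun p => f p)
    set g : Fin 3 → ℝ → ℝ := fun i c =>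
      if h : ∃ p : M, (p : Fin 3 → ℝ) i = c then
        x s(h.choose, ptn hlayer h.choose i) /
          ((Finset.univ.filter fun j =>
            ((h.choose : M) : Fin 3 → ℝ) j =
              ((ptn hlayer h.choose i : M) : Fin 3 → ℝ) j).card : ℝ)
      else 0 with hg
    have key : ∀ p : M, ∀ i : Fin 3, g i ((p : Fin 3 → ℝ) i) =
        x s(p, ptn hlayer p i) /
          ((Finset.univ.filter fun j =>
            (p : Fin 3 → ℝ) j = ((ptn hlayer p i : M) : Fin 3 → ℝ) j).card : ℝ) := by
      intro p i
      have hex : ∃ q : M, (q : Fin 3 → ℝ) i = (p : Fin 3 → ℝ) i := ⟨p, rfl⟩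
      rw [hg]
      simp only
      rw [dif_pos hex]
      set w : M := hex.choose with hw
      have hwi : (w : Fin 3 → ℝ) i = (p : Fin 3 → ℝ) i := hex.choose_spec
      by_cases hwp : w = p
      · rw [hwp]
      · have hwq : w = ptn hlayer p i := ptn_unique hlayer hwi hwp
        have hpw : p = ptn hlayer w i := by
          refine ptn_unique hlayer hwi.symm (Ne.symm hwp)
        have hedge : s(w, ptn hlayer w i) = s(p, ptn hlayer p i) := by
          rw [← hpw, hwq, Sym2.eq_swap]
        have hcard : (Finset.univ.filter fun j =>
              (w : Fin 3 → ℝ) j = ((ptn hlayer w i : M) : Fin 3 → ℝ) j) =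
            (Finset.univ.filter fun j =>
              (p : Fin 3 → ℝ) j = ((ptn hlayer p i : M) : Fin 3 → ℝ) j) := by
          rw [← hpw, hwq]
          ext j
          simp only [Finset.mem_filter, Finset.mem_univ, true_and]
          exact eq_comm
        rw [hedge, hcard]
    refine ⟨g 0, g 1, g 2, ?_⟩
    intro p hp
    set P : M := ⟨p, hp⟩ with hP
    have h1 : f p = ∑ᶠ e ∈ (layerGraph M).incidenceSet P, x e := (hx P).symm
    rw [h1, incidence_eq hlayer P, finsum_mem_coe_finset]
    have h2 : (∑ e ∈ (Finset.univ : Finset (Fin 3)).image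
          (fun i => s(P, ptn hlayer P i)), x e) =
        ∑ i : Fin 3, g i ((P : Fin 3 → ℝ) i) := by
      refine Finset.sum_image' (fun i => g i ((P : Fin 3 → ℝ) i)) ?_
      intro c _
      have hfib := fiber_eq hlayer P c
      have hcardpos : 0 < (Finset.univ.filter fun i =>
          s(P, ptn hlayer P i) = s(P, ptn hlayer P c)).card := by
        refine Finset.card_pos.mpr ⟨c, ?_⟩
        simp
      have hterm : ∀ i ∈ (Finset.univ.filter fun i =>
            s(P, ptn hlayer P i) = s(P, ptn hlayer P c)),
          g i ((P : Fin 3 → ℝ) i) =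
            x s(P, ptn hlayer P c) /
              ((Finset.univ.filter fun i =>
                s(P, ptn hlayer P i) = s(P, ptn hlayer P c)).card : ℝ) := by
        intro i hi
        simp only [Finset.mem_filter, Finset.mem_univ, true_and] at hi
        have hqeq : ptn hlayer P i = ptn hlayer P c := Sym2.congr_right.mp hi
        rw [key P i, hi, hfib, ← hqeq]
      rw [Finset.sum_congr rfl hterm, Finset.sum_const, nsmul_eq_mul, mul_comm,
        div_mul_cancel₀ _ (Nat.cast_ne_zero.mpr hcardpos.ne' : (_ : ℝ) ≠ 0)]
    rw [h2, Fin.sum_univ_three]
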